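/- For every integer n ≥ 1, the Bernoulli–Fibonacci polynomials satisfy the recursion ∑_{l=0}^{n−1} [n choose l]_F · B_l^F(x) = F_n · x^{n−1} (an identity in the polynomial ring ℚ[x]). -/

import Mathlib

/-- The fibofactorial: `F_n! = F_1 * F_2 * ... * F_n`, with `F_0! = 1`. -/
def fibFact (n : ℕ) : ℕ := ∏ i ∈ Finset.range n, Nat.fib (i + 1)

/-- The Fibonomial coefficient `[n choose k]_F = F_n! / (F_k! * F_{n-k}!)` as a rational. -/
def fibonomial (n k : ℕ) : ℚ := (fibFact n : ℚ) / ((fibFact k : ℚ) * (fibFact (n - k) : ℚ))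

lemma fibFact_pos (n : ℕ) : 0 < fibFact n :=
  Finset.prod_pos fun i _ => Nat.fib_pos.2 (Nat.succ_pos i)

lemma fibFact_ne_zero (n : ℕ) : (fibFact n : ℚ) ≠ 0 := by
  exact_mod_cast (fibFact_pos n).ne'

/-- For every `n ≥ 1`, `∑_{l=0}^{n-1} [n choose l]_F * B_l^F(x) = F_n * x^{n-1}` in `ℚ[x]`.
Here `B` is the (unique) sequence of Bernoulli–Fibonacci polynomials, characterized by the
generating-function identity
`(∑ B_n(x) z^n/F_n!) * (∑_{n≥1} z^n/F_n!) = z * ∑ x^n z^n/F_n!` in `(ℚ[x])⟦z⟧`. -/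
theorem bernoulliFib_recursion
    (B : ℕ → Polynomial ℚ)
    (hB : (PowerSeries.mk fun n => Polynomial.C ((fibFact n : ℚ)⁻¹) * B n) *
          (PowerSeries.mk fun n =>
            if n = 0 then 0 else Polynomial.C ((fibFact n : ℚ)⁻¹)) =
          PowerSeries.X *
          PowerSeries.mk (fun n => Polynomial.C ((fibFact n : ℚ)⁻¹) * Polynomial.X ^ n))
    (n : ℕ) (hn : 1 ≤ n) :
    ∑ l ∈ Finset.range n, Polynomial.C (fibonomial n l) * B l =
      Polynomial.C ((Nat.fib n : ℚ)) * Polynomial.X ^ (n - 1) := by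
  obtain ⟨m, rfl⟩ : ∃ m, n = m + 1 := ⟨n - 1, (Nat.succ_pred_eq_of_pos hn).symm⟩
  have key := congrArg (PowerSeries.coeff (R := Polynomial ℚ) (m + 1)) hB
  rw [PowerSeries.coeff_mul, PowerSeries.coeff_succ_X_mul, PowerSeries.coeff_mk,
    Finset.Nat.sum_antidiagonal_eq_sum_range_succ_mk, Finset.sum_range_succ] at key
  simp only [PowerSeries.coeff_mk, Nat.sub_self, if_true, mul_zero, add_zero] at key
  have key2 : ∑ i ∈ Finset.range (m + 1),
      Polynomial.C ((fibFact i : ℚ)⁻¹ * (fibFact (m + 1 - i) : ℚ)⁻¹) * B i =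
      Polynomial.C ((fibFact m : ℚ)⁻¹) * Polynomial.X ^ m := by
    rw [← key]
    refine Finset.sum_congr rfl fun i hi => ?_
    have : m + 1 - i ≠ 0 := by
      have := Finset.mem_range.1 hi; omega
    rw [if_neg this, map_mul]
    ring
  have hmul := congrArg (fun p => Polynomial.C ((fibFact (m + 1) : ℚ)) * p) key2
  simp only [Finset.mul_sum] at hmul
  calc ∑ l ∈ Finset.range (m + 1), Polynomial.C (fibonomial (m + 1) l) * B l
      = ∑ i ∈ Finset.range (m + 1), Polynomial.C ((fibFact (m + 1) : ℚ)) *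
        (Polynomial.C ((fibFact i : ℚ)⁻¹ * (fibFact (m + 1 - i) : ℚ)⁻¹) * B i) := by
        refine Finset.sum_congr rfl fun i _ => ?_
        rw [← mul_assoc, ← map_mul]
        congr 2
        rw [fibonomial]
        field_simp
    _ = Polynomial.C ((fibFact (m + 1) : ℚ)) *
        (Polynomial.C ((fibFact m : ℚ)⁻¹) * Polynomial.X ^ m) := hmul
    _ = Polynomial.C ((Nat.fib (m + 1) : ℚ)) * Polynomial.X ^ (m + 1 - 1) := by
        rw [← mul_assoc, ← map_mul]
        congr 2
        · have : fibFact (m + 1) = fibFact m * Nat.fib (m + 1) := Finset.prod_range_succ _ _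
          rw [this]
          push_cast
          rw [mul_comm ((fibFact m : ℚ)) _, mul_assoc, mul_inv_cancel₀ (fibFact_ne_zero m), mul_one]
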